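/- arXiv:2009.10597 — 3 statements merged into one kernel-verified Lean document; each statement's English description precedes it below -/
import Mathlib

section
/- Let $m,n,r,s$ be positive integers with $n=m+2$, $m\geq 4$, and $s\binom{m-1}{3}=r\binom{n-1}{3}$ (equivalently, $s(m-2)(m-3)=rm(m+1)$). Then $s\geq r+2$. -/
lemma two_choose (k : ℕ) : 2 * (k+2).choose 2 = (k+1)*(k+2) := by
  induction k with
  | zero => decide
  | succ n ih =>
    have : (n+3).choose 2 = (n+2).choose 1 + (n+2).choose 2 := Nat.choose_succ_succ _ _
    rw [this, Nat.mul_add, ih, Nat.choose_one_right]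
    ring

lemma six_choose (k : ℕ) : 6 * (k+3).choose 3 = (k+1)*(k+2)*(k+3) := by
  induction k with
  | zero => decide
  | succ n ih =>
    have : (n+4).choose 3 = (n+3).choose 2 + (n+3).choose 3 := Nat.choose_succ_succ _ _
    rw [this, Nat.mul_add, ih]
    have h2 : (6 : ℕ) * (n+3).choose 2 = 3 * (2 * (n+3).choose 2) := by ring
    rw [h2, two_choose (n+1)]
    ring

theorem stmt_5 (m n r s : ℕ) (hm0 : 0 < m) (hn0 : 0 < n) (hr : 0 < r) (hs : 0 < s)
    (hn : n = m + 2) (hm : 4 ≤ m)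
    (h : s * (m - 1).choose 3 = r * (n - 1).choose 3) :
    s ≥ r + 2 := by
  subst hn
  obtain ⟨k, rfl⟩ := Nat.exists_eq_add_of_le hm
  have h' : s * (k+3).choose 3 = r * (k+5).choose 3 := by
    convert h using 3 <;> omega
  have h6 : s * ((k+1)*(k+2)*(k+3)) = r * ((k+3)*(k+4)*(k+5)) := by
    have e1 := six_choose k
    have e2 := six_choose (k+2)
    have e2' : 6 * (k+5).choose 3 = (k+3)*(k+4)*(k+5) := by
      convert e2 using 3
    calc s * ((k+1)*(k+2)*(k+3)) = 6 * (s * (k+3).choose 3) := by rw [← e1]; ring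
      _ = 6 * (r * (k+5).choose 3) := by rw [h']
      _ = r * ((k+3)*(k+4)*(k+5)) := by rw [← e2']; ring
  have key : s * ((k+1)*(k+2)) = r * ((k+4)*(k+5)) := by
    have hpos : 0 < k + 3 := by omega
    apply Nat.eq_of_mul_eq_mul_right hpos
    calc s * ((k+1)*(k+2)) * (k+3) = s * ((k+1)*(k+2)*(k+3)) := by ring
      _ = r * ((k+3)*(k+4)*(k+5)) := h6
      _ = r * ((k+4)*(k+5)) * (k+3) := by ring
  by_contra hlt
  push_neg at hlt
  rcases Nat.lt_or_ge s (r+1) with hsr | hsr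
  · -- s ≤ r : contradiction
    have : s * ((k+1)*(k+2)) ≤ r * ((k+1)*(k+2)) :=
      Nat.mul_le_mul_right _ (by omega)
    nlinarith [key, hr]
  · have hse : s = r + 1 := by omega
    subst hse
    have keyZ : ((r:ℤ)+1) * ((k+1)*(k+2)) = r * ((k+4)*(k+5)) := by
      exact_mod_cast key
    have hdvd : ((k:ℤ)+3) ∣ 2 := ⟨6*r - k, by ring_nf; linarith [keyZ]⟩
    have := Int.le_of_dvd (by norm_num) hdvd
    omega
end

section
/- Let $m,n,r,s$ be positive integers with $n>m$, $s>r$, $s\binom{m-1}{3}=r\binom{n-1}{3}$, $m\geq 4$, $n\geq m+2$, and suppose $m(s-r)\equiv 1\pmod 3$, with the additional fact that if $n-m=2$ then $s-r\geq 2$. Then $[m(s-r)-1]\binom{n-m}{3}+[m(s-r)-2]\cdot\frac{m-1}{2}\binom{n-m}{2}\geq (n-m)\binom{m-1}{2}$. -/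
lemma stmt_8_aux1 (a d k c3 : ℚ) (ha : 4 ≤ a) (hd : 1 ≤ d) (hk : 3 ≤ k) (hc3 : 0 ≤ c3) :
    (a*d - 1)*c3 + (a*d - 2)*((a-1)/2)*(k*(k-1)/2) ≥ k*((a-1)*(a-2)/2) := by
  have hab : a ≤ a * d := by nlinarith
  have h1 : 0 ≤ (a*d - 1)*c3 := by nlinarith
  have h2 : (a*d - 2)*(k-1) - 2*(a-2) ≥ 0 := by nlinarith
  nlinarith [mul_nonneg (mul_nonneg (by nlinarith : (0:ℚ) ≤ a - 1) (by nlinarith : (0:ℚ) ≤ k)) h2]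

lemma stmt_8_aux2 (a d : ℚ) (ha : 4 ≤ a) (hd : 2 ≤ d) :
    (a*d - 1)*0 + (a*d - 2)*((a-1)/2)*1 ≥ 2*((a-1)*(a-2)/2) := by
  nlinarith [mul_nonneg (show (0:ℚ) ≤ a - 1 by linarith)
    (show (0:ℚ) ≤ a*d - 2*a + 2 by nlinarith)]

theorem stmt_8 (m n r s : ℕ) (hm0 : 0 < m) (hn0 : 0 < n) (hr : 0 < r) (hs : 0 < s)
    (hmn : m < n) (hrs : r < s)
    (h : s * (m - 1).choose 3 = r * (n - 1).choose 3)
    (hm : 4 ≤ m) (hn : m + 2 ≤ n)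
    (hmod : (m * (s - r)) % 3 = 1)
    (hextra : n - m = 2 → 2 ≤ s - r) :
    ((m : ℚ) * ((s : ℚ) - r) - 1) * ((n - m).choose 3 : ℚ)
      + ((m : ℚ) * ((s : ℚ) - r) - 2) * (((m : ℚ) - 1) / 2) * ((n - m).choose 2 : ℚ)
      ≥ ((n : ℚ) - m) * ((m - 1).choose 2 : ℚ) := by
  have hD : 1 ≤ s - r := Nat.sub_pos_of_lt hrs
  have hK : 2 ≤ n - m := by omega
  have hsr : (s : ℚ) - r = ((s - r : ℕ) : ℚ) := by rw [Nat.cast_sub hrs.le]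
  have hnm : (n : ℚ) - m = ((n - m : ℕ) : ℚ) := by rw [Nat.cast_sub hmn.le]
  have hm1 : ((m - 1 : ℕ) : ℚ) = (m : ℚ) - 1 := by
    rw [Nat.cast_sub hm0]; norm_num
  have hCm : (((m - 1).choose 2 : ℕ) : ℚ) = ((m : ℚ) - 1) * ((m : ℚ) - 2) / 2 := by
    rw [Nat.cast_choose_two, hm1]; ring
  rw [hsr, hnm, hCm]
  have hDq : (1 : ℚ) ≤ ((s - r : ℕ) : ℚ) := by exact_mod_cast hD
  have hmq : (4 : ℚ) ≤ (m : ℚ) := by exact_mod_cast hm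
  rcases eq_or_lt_of_le hK with h2 | h3
  · have hD2q : (2 : ℚ) ≤ ((s - r : ℕ) : ℚ) := by exact_mod_cast hextra h2.symm
    rw [← h2]
    have := stmt_8_aux2 (m : ℚ) ((s - r : ℕ) : ℚ) hmq hD2q
    simpa using this
  · have hKq : (3 : ℚ) ≤ ((n - m : ℕ) : ℚ) := by exact_mod_cast h3
    have hC2 : (((n - m).choose 2 : ℕ) : ℚ)
        = ((n - m : ℕ) : ℚ) * (((n - m : ℕ) : ℚ) - 1) / 2 := by
      exact Nat.cast_choose_two (K := ℚ) (n - m)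
    have hC3 : (0 : ℚ) ≤ (((n - m).choose 3 : ℕ) : ℚ) := by positivity
    rw [hC2]
    exact stmt_8_aux1 (m : ℚ) ((s - r : ℕ) : ℚ) ((n - m : ℕ) : ℚ) _ hmq hDq hKq hC3
end

section
/- Let $m,n$ be integers with $m\geq 6$ and $2m\leq n\leq 4m$. Then $12\binom{m}{2}\binom{n-m}{2}\geq 12\binom{n-1}{3}$. -/
lemma c2_eq (x : ℕ) : 2 * (x + 1).choose 2 = (x + 1) * x := by
  induction x with
  | zero => rfl
  | succ y ih =>
    rw [show y + 1 + 1 = (y + 1) + 1 from rfl, Nat.choose_succ_succ (y+1) 1,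
      Nat.mul_add, ih, Nat.choose_one_right]
    ring

lemma c3_eq (x : ℕ) : 6 * (x + 2).choose 3 = (x + 2) * (x + 1) * x := by
  induction x with
  | zero => rfl
  | succ y ih =>
    rw [show y + 1 + 2 = (y + 2) + 1 from rfl, Nat.choose_succ_succ (y+2) 2,
      Nat.mul_add]
    have h2 := c2_eq (y + 1)
    have : 6 * (y + 2).choose 2 = 3 * (2 * (y + 2).choose 2) := by ring
    rw [ih, this, show y+1+1 = y+2 from rfl, h2]
    ring

theorem stmt_16 (m n : ℕ) (hm : 6 ≤ m) (hn1 : 2 * m ≤ n) (hn2 : n ≤ 4 * m) :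
    12 * (n - 1).choose 3 ≤ 12 * m.choose 2 * (n - m).choose 2 := by
  obtain ⟨p, rfl⟩ : ∃ p, m = p + 6 := ⟨m - 6, by omega⟩
  obtain ⟨k, rfl⟩ : ∃ k, n = 2 * (p + 6) + k := ⟨n - 2*(p+6), by omega⟩
  have hk : k ≤ 2 * p + 12 := by omega
  have e1 : 2 * (p + 6) + k - 1 = (2*p + k + 9) + 2 := by omega
  have e2 : 2 * (p + 6) + k - (p + 6) = (p + k + 5) + 1 := by omega
  have e3 : p + 6 = (p + 5) + 1 := by omega
  rw [e1, e2, e3]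
  have h3 := c3_eq (2*p + k + 9)
  have ha := c2_eq (p + 5)
  have hb := c2_eq (p + k + 5)
  nlinarith [sq_nonneg (p + k), sq_nonneg p, sq_nonneg k, Nat.zero_le p, Nat.zero_le k,
    mul_le_mul_left hk (p*p + k*k), mul_le_mul_left hk p, mul_le_mul_left hk k,
    mul_le_mul_left hk (p*k)]
end
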